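/- arXiv:2002.03636 — 4 statements merged into one kernel-verified Lean document; each statement's English description precedes it below -/
import Mathlib

section
/- Let k ≥ 0 and let (ΔN_t)_{t>k} be a martingale difference sequence adapted to a filtration (F_t)_{t≥k} (each ΔN_t is F_t-measurable and E[ΔN_t | F_{t−1}] = 0 almost surely) such that E[ΔN_t² | F_{t−1}] < ∞ almost surely for every t > k. Then for any δ > 0 and λ > 0, with probability at least 1 − δ, simultaneously for all n ≥ 1: Σ_{t=k+1}^{k+n} ( ΔN_t − (λ/2)·(ΔN_t² + E[ΔN_t² | F_{t−1}]) ) ≤ ln(1/δ)/λ. -/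
open MeasureTheory ProbabilityTheory Real Finset
open scoped ENNReal NNReal


lemma expQuadAux : ∀ x : ℝ, 1 ≤ (1 + x + x^2/2) * Real.exp (x^2/2 - x) := by
  set G : ℝ → ℝ := fun x => (1 + x + x^2/2) * Real.exp (x^2/2 - x) with hGdef
  have hG : ∀ x : ℝ, HasDerivAt G ((x * (x^2 + x + 2) / 2) * Real.exp (x^2/2 - x)) x := by
    intro x
    have h1 : HasDerivAt (fun x : ℝ => 1 + x + x^2/2) (1 + x) x := by
      have := ((hasDerivAt_id x).const_add 1).add (((hasDerivAt_pow 2 x)).div_const 2)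
      exact this.congr_deriv (by push_cast; ring)
    have h2 : HasDerivAt (fun x : ℝ => Real.exp (x^2/2 - x)) ((x - 1) * Real.exp (x^2/2 - x)) x := by
      have hq : HasDerivAt (fun x : ℝ => x^2/2 - x) (x - 1) x := by
        have := ((hasDerivAt_pow 2 x).div_const 2).sub (hasDerivAt_id x)
        exact this.congr_deriv (by push_cast; ring)
      simpa [mul_comm] using hq.exp
    have := h1.mul h2
    exact this.congr_deriv (by ring)
  have hmono : MonotoneOn G (Set.Ici (0:ℝ)) := by
    apply monotoneOn_of_hasDerivWithinAt_nonneg (convex_Ici 0)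
      (fun x _ => (hG x).continuousAt.continuousWithinAt)
      (fun x _ => (hG x).hasDerivWithinAt)
    intro x hx
    rw [interior_Ici] at hx
    have : (0:ℝ) < x := hx
    have h2 : (0:ℝ) < x^2 + x + 2 := by nlinarith
    positivity
  have hanti : AntitoneOn G (Set.Iic (0:ℝ)) := by
    apply antitoneOn_of_hasDerivWithinAt_nonpos (convex_Iic 0)
      (fun x _ => (hG x).continuousAt.continuousWithinAt)
      (fun x _ => (hG x).hasDerivWithinAt)
    intro x hx
    rw [interior_Iic] at hx
    have hx0 : x < 0 := hx
    have h2 : (0:ℝ) < x^2 + x + 2 := by nlinarith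
    have hE := Real.exp_pos (x^2/2 - x)
    have hneg : x * (x^2 + x + 2) / 2 < 0 := by nlinarith
    exact le_of_lt (mul_neg_of_neg_of_pos hneg hE)
  have hG0 : G 0 = 1 := by simp [hGdef]
  intro x
  rcases le_total 0 x with h | h
  · have := hmono (Set.self_mem_Ici) h h
    rwa [hG0] at this
  · have := hanti h (Set.self_mem_Iic) h
    rwa [hG0] at this

lemma expQuad (x : ℝ) : Real.exp (x - x^2/2) ≤ 1 + x + x^2/2 := by
  have h := expQuadAux x
  have hE : Real.exp (x - x^2/2) * Real.exp (x^2/2 - x) = 1 := by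
    rw [← Real.exp_add]; norm_num
  have hEpos := Real.exp_pos (x^2/2 - x)
  nlinarith [Real.exp_pos (x - x^2/2)]

lemma villeAux {Ω : Type*} {m0 : MeasurableSpace Ω} {μ : Measure Ω} [IsFiniteMeasure μ]
    {G : Filtration ℕ m0} {Z : ℕ → Ω → ℝ} (hZ : Supermartingale Z G μ)
    (hpos : ∀ n ω, 0 ≤ Z n ω) (ε : ℝ≥0) (N : ℕ) :
    ε • μ {ω | (ε : ℝ) ≤ (range (N+1)).sup' nonempty_range_add_one fun m => Z m ω}
      ≤ ENNReal.ofReal (∫ ω, Z 0 ω ∂μ) := by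
  classical
  set A := {ω | (ε : ℝ) ≤ (range (N+1)).sup' nonempty_range_add_one fun m => Z m ω} with hA
  set τ : Ω → WithTop ℕ := fun ω => (hittingBtwn Z {y : ℝ | (ε : ℝ) ≤ y} 0 N ω : ℕ) with hτdef
  have hτ_st : IsStoppingTime G τ := Adapted.isStoppingTime_hittingBtwn hZ.1.adapted measurableSet_Ici
  have hτ_le : ∀ ω, τ ω ≤ N := fun ω => WithTop.coe_le_coe.2 (hittingBtwn_le ω)
  have hint_sv : Integrable (stoppedValue Z τ) μ := by
    exact ((hZ.neg.integrable_stoppedValue hτ_st hτ_le).neg).congr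
      (Filter.Eventually.of_forall fun ω => by simp [stoppedValue])
  have hsv_ge : ∀ ω ∈ A, (ε : ℝ) ≤ stoppedValue Z τ ω := by
    intro ω hω
    simp only [hA, Set.mem_setOf_eq, le_sup'_iff, mem_range, Nat.lt_succ_iff] at hω
    obtain ⟨j, hj1, hj2⟩ := hω
    refine stoppedValue_hittingBtwn_mem ?_
    exact ⟨j, ⟨Nat.zero_le _, hj1⟩, hj2⟩
  have hA_meas : MeasurableSet A :=
    measurableSet_le measurable_const
      (Finset.measurable_range_sup'' fun m _ => ((hZ.1 m).mono (G.le m)).measurable)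
  have h1 : ε • μ A ≤ ENNReal.ofReal (∫ ω in A, stoppedValue Z τ ω ∂μ) := by
    have h := setIntegral_ge_of_const_le hA_meas (measure_ne_top _ _) hsv_ge hint_sv.integrableOn
    rw [ENNReal.le_ofReal_iff_toReal_le, ENNReal.toReal_smul]
    · simpa [Measure.real, NNReal.smul_def, mul_comm] using h
    · exact ENNReal.mul_ne_top (by simp) (measure_ne_top _ _)
    · exact le_trans (smul_nonneg measureReal_nonneg ε.coe_nonneg) h
  have h2 : ∫ ω in A, stoppedValue Z τ ω ∂μ ≤ ∫ ω, stoppedValue Z τ ω ∂μ :=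
    setIntegral_le_integral hint_sv (Filter.Eventually.of_forall fun ω => hpos _ ω)
  have h3 : ∫ ω, stoppedValue Z τ ω ∂μ ≤ ∫ ω, Z 0 ω ∂μ := by
    have h := hZ.neg.expected_stoppedValue_mono (isStoppingTime_const G 0) hτ_st
      (fun ω => WithTop.coe_le_coe.2 (Nat.zero_le _)) hτ_le
    simp only [stoppedValue, Pi.neg_apply, integral_neg, neg_le_neg_iff] at h
    simpa [stoppedValue] using h
  exact h1.trans (ENNReal.ofReal_le_ofReal (h2.trans h3))

set_option maxHeartbeats 1000000 in
/-- **Lemma (simultaneous Bernstein-type martingale bound).** Let `k ≥ 0` and `(ΔN_t)_{t>k}` be a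
martingale difference sequence adapted to a filtration `(F_t)` with square-integrable increments.
Then for any `δ, λ > 0`, with probability at least `1 − δ`, simultaneously for all `n ≥ 1`,
`∑_{t=k+1}^{k+n} (ΔN_t − (λ/2)(ΔN_t² + E[ΔN_t²|F_{t−1}])) ≤ ln(1/δ)/λ`. -/
theorem martingale_simultaneous_bernstein
    {Ω : Type*} {m0 : MeasurableSpace Ω} (μ : Measure Ω) [IsProbabilityMeasure μ]
    (𝓕 : Filtration ℕ m0) (k : ℕ) (ΔN : ℕ → Ω → ℝ)
    (hadapt : ∀ t > k, StronglyMeasurable[𝓕 t] (ΔN t))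
    (hint : ∀ t > k, Integrable (ΔN t) μ)
    (hint2 : ∀ t > k, Integrable (fun ω => (ΔN t ω) ^ 2) μ)
    (hmart : ∀ t > k, μ[ΔN t|𝓕 (t - 1)] =ᵐ[μ] 0)
    (δ lam : ℝ) (hδ : 0 < δ) (hlam : 0 < lam) :
    ENNReal.ofReal (1 - δ) ≤
      μ {ω | ∀ n ≥ 1,
        ∑ t ∈ Finset.Icc (k + 1) (k + n),
            (ΔN t ω - lam / 2 * ((ΔN t ω) ^ 2 + (μ[fun ω' => (ΔN t ω') ^ 2|𝓕 (t - 1)]) ω))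
          ≤ Real.log δ⁻¹ / lam} := by
  classical
  -- abbreviations
  set V : ℕ → Ω → ℝ := fun t => μ[fun ω' => (ΔN t ω') ^ 2|𝓕 (t - 1)] with hVdef
  set term : ℕ → Ω → ℝ := fun t ω => ΔN t ω - lam / 2 * ((ΔN t ω) ^ 2 + V t ω) with htermdef
  set S : ℕ → Ω → ℝ := fun n ω => ∑ t ∈ Finset.Icc (k + 1) (k + n), term t ω with hSdef
  set Z : ℕ → Ω → ℝ := fun n ω => Real.exp (lam * S n ω) with hZdef
  set G : Filtration ℕ m0 :=
    { seq := fun n => 𝓕 (k + n)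
      mono' := fun i j hij => 𝓕.mono (by omega)
      le' := fun n => 𝓕.le _ } with hGdef
  -- pointwise evaluation lemmas (all `rfl`)
  have hterm_eval : ∀ t ω, term t ω = ΔN t ω - lam / 2 * ((ΔN t ω) ^ 2 + V t ω) :=
    fun _ _ => rfl
  have hS_eval : ∀ m ω, S m ω = ∑ t ∈ Finset.Icc (k + 1) (k + m), term t ω := fun _ _ => rfl
  have hZ_eval : ∀ m ω, Z m ω = Real.exp (lam * S m ω) := fun _ _ => rfl
  have hZpos : ∀ n ω, 0 < Z n ω := fun n ω => Real.exp_pos _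
  -- nonnegativity of conditional variances
  have hVnn : ∀ᵐ ω ∂μ, ∀ t, 0 ≤ V t ω :=
    ae_all_iff.2 fun t => condExp_nonneg (Filter.Eventually.of_forall fun ω => sq_nonneg _)
  -- strong measurability
  have hterm_sm : ∀ t, k < t → StronglyMeasurable[𝓕 t] (term t) := by
    intro t ht
    have h1 := hadapt t ht
    have h2 : StronglyMeasurable[𝓕 t] (V t) :=
      stronglyMeasurable_condExp.mono (𝓕.mono (Nat.sub_le t 1))
    exact h1.sub (((h1.pow 2).add h2).const_mul (lam / 2))
  have hS_sm : ∀ n, StronglyMeasurable[G n] (S n) := by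
    intro n
    have : S n = ∑ t ∈ Finset.Icc (k + 1) (k + n), term t := by
      funext ω; rw [hS_eval]; simp [Finset.sum_apply]
    rw [this]
    refine Finset.stronglyMeasurable_sum _ fun t htmem => ?_
    rw [Finset.mem_Icc] at htmem
    have htsm : StronglyMeasurable[𝓕 (k + n)] (term t) :=
      (hterm_sm t (by omega)).mono (𝓕.mono (by omega : t ≤ k + n))
    exact htsm
  have hZ_sm : ∀ n, StronglyMeasurable[G n] (Z n) := fun n =>
    Real.continuous_exp.comp_stronglyMeasurable ((hS_sm n).const_mul lam)
  have hZadapted : StronglyAdapted G Z := fun n => hZ_sm n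
  -- a.e. bound on Z n
  have hZbdd : ∀ n, ∀ᵐ ω ∂μ, ‖Z n ω‖ ≤ Real.exp (n / 2) := by
    intro n
    filter_upwards [hVnn] with ω hV
    have hsum : lam * S n ω ≤ (n : ℝ) / 2 := by
      rw [hS_eval, Finset.mul_sum]
      have hcardn : (Finset.Icc (k + 1) (k + n)).card = n := by
        rw [Nat.card_Icc]; omega
      calc ∑ t ∈ Finset.Icc (k + 1) (k + n), lam * term t ω
          ≤ ∑ t ∈ Finset.Icc (k + 1) (k + n), (1 / 2 : ℝ) := by
            refine Finset.sum_le_sum fun t _ => ?_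
            have h1 : 0 ≤ V t ω := hV t
            have h2 : lam * ΔN t ω - (lam * ΔN t ω) ^ 2 / 2 ≤ 1 / 2 := by
              nlinarith [sq_nonneg (lam * ΔN t ω - 1)]
            have h3 : 0 ≤ lam ^ 2 * V t ω := mul_nonneg (sq_nonneg lam) h1
            rw [hterm_eval]
            nlinarith [h2, h3]
        _ = (n : ℝ) / 2 := by rw [Finset.sum_const, nsmul_eq_mul, hcardn]; ring
    rw [Real.norm_eq_abs, abs_of_pos (hZpos n ω), hZ_eval]
    exact Real.exp_le_exp.2 hsum
  have hZint : ∀ n, Integrable (Z n) μ := fun n =>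
    Integrable.mono' (integrable_const _) ((hZ_sm n).mono (G.le n)).aestronglyMeasurable (hZbdd n)
  -- the supermartingale step
  have hstep : ∀ n, μ[Z (n + 1)|G n] ≤ᵐ[μ] Z n := by
    intro n
    have ht : k < k + n + 1 := by omega
    set U : Ω → ℝ :=
      fun ω => Real.exp (lam * ΔN (k + n + 1) ω - lam ^ 2 / 2 * (ΔN (k + n + 1) ω) ^ 2) with hUdef
    set f₀ : Ω → ℝ := fun ω => Z n ω * Real.exp (-(lam ^ 2 / 2 * V (k + n + 1) ω)) with hf₀def
    have hU_eval : ∀ ω, U ω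
        = Real.exp (lam * ΔN (k + n + 1) ω - lam ^ 2 / 2 * (ΔN (k + n + 1) ω) ^ 2) :=
      fun _ => rfl
    have hf₀_eval : ∀ ω, f₀ ω = Z n ω * Real.exp (-(lam ^ 2 / 2 * V (k + n + 1) ω)) :=
      fun _ => rfl
    have hZsplit : Z (n + 1) = f₀ * U := by
      funext ω
      have hsum : S (n + 1) ω = S n ω + term (k + n + 1) ω := by
        rw [hS_eval, hS_eval]
        have hle : k + 1 ≤ k + n + 1 := by omega
        exact Finset.sum_Icc_succ_top hle _
      show Z (n + 1) ω = f₀ ω * U ω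
      rw [hZ_eval, hsum, hf₀_eval, hU_eval, hZ_eval, mul_assoc, ← Real.exp_add, ← Real.exp_add]
      exact congrArg Real.exp (by rw [hterm_eval]; ring)
    have hU_sm : AEStronglyMeasurable U μ := by
      refine (Real.continuous_exp.comp_stronglyMeasurable ?_).aestronglyMeasurable
      have h1 := (hadapt _ ht).mono (𝓕.le _)
      exact (h1.const_mul lam).sub ((h1.pow 2).const_mul (lam ^ 2 / 2))
    have hU_bdd : ∀ ω, ‖U ω‖ ≤ Real.exp (1 / 2 : ℝ) := by
      intro ω
      rw [hU_eval ω, Real.norm_eq_abs, abs_of_pos (Real.exp_pos _)]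
      apply Real.exp_le_exp.2
      nlinarith [sq_nonneg (lam * ΔN (k + n + 1) ω - 1)]
    have hU_int : Integrable U μ :=
      Integrable.mono' (integrable_const _) hU_sm (Filter.Eventually.of_forall hU_bdd)
    have hf₀_sm : StronglyMeasurable[G n] f₀ := by
      refine (hZ_sm n).mul (Real.continuous_exp.comp_stronglyMeasurable ?_)
      have h2 : StronglyMeasurable[G n] (V (k + n + 1)) := stronglyMeasurable_condExp
      exact (h2.const_mul (lam ^ 2 / 2)).neg
    have hmul_int : Integrable (f₀ * U) μ := hZsplit ▸ hZint (n + 1)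
    have hpull : μ[f₀ * U|G n] =ᵐ[μ] f₀ * μ[U|G n] :=
      condExp_mul_of_stronglyMeasurable_left hf₀_sm hmul_int hU_int
    -- conditional expectation of U is at most 1 + lam^2/2 * V
    have hsum_int : Integrable
        (fun ω => 1 + lam * ΔN (k + n + 1) ω + lam ^ 2 / 2 * (ΔN (k + n + 1) ω) ^ 2) μ :=
      ((integrable_const 1).add ((hint _ ht).const_mul lam)).add ((hint2 _ ht).const_mul _)
    have hUle : ∀ ω, U ω ≤ 1 + lam * ΔN (k + n + 1) ω + lam ^ 2 / 2 * (ΔN (k + n + 1) ω) ^ 2 := by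
      intro ω
      have h := expQuad (lam * ΔN (k + n + 1) ω)
      have e : lam * ΔN (k + n + 1) ω - lam ^ 2 / 2 * (ΔN (k + n + 1) ω) ^ 2
          = lam * ΔN (k + n + 1) ω - (lam * ΔN (k + n + 1) ω) ^ 2 / 2 := by ring
      rw [hU_eval ω, e]
      nlinarith [h]
    have hcond1 : μ[U|G n] ≤ᵐ[μ]
        μ[fun ω => 1 + lam * ΔN (k + n + 1) ω + lam ^ 2 / 2 * (ΔN (k + n + 1) ω) ^ 2|G n] :=
      condExp_mono hU_int hsum_int (Filter.Eventually.of_forall hUle)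
    have hcond2 : μ[fun ω => 1 + lam * ΔN (k + n + 1) ω
        + lam ^ 2 / 2 * (ΔN (k + n + 1) ω) ^ 2|G n]
        =ᵐ[μ] fun ω => 1 + lam ^ 2 / 2 * V (k + n + 1) ω := by
      have e1 : μ[fun ω => 1 + lam * ΔN (k + n + 1) ω + lam ^ 2 / 2 * (ΔN (k + n + 1) ω) ^ 2|G n]
          =ᵐ[μ] μ[fun ω => 1 + lam * ΔN (k + n + 1) ω|G n]
            + μ[fun ω => lam ^ 2 / 2 * (ΔN (k + n + 1) ω) ^ 2|G n] :=
        condExp_add ((integrable_const 1).add ((hint _ ht).const_mul lam))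
          ((hint2 _ ht).const_mul _) _
      have e2 : μ[fun ω => 1 + lam * ΔN (k + n + 1) ω|G n]
          =ᵐ[μ] μ[fun _ => (1 : ℝ)|G n] + μ[fun ω => lam * ΔN (k + n + 1) ω|G n] :=
        condExp_add (integrable_const 1) ((hint _ ht).const_mul lam) _
      have e3 : μ[fun ω => lam * ΔN (k + n + 1) ω|G n] =ᵐ[μ] (fun _ => (0 : ℝ)) := by
        have h : μ[fun ω => lam • ΔN (k + n + 1) ω|G n] =ᵐ[μ] lam • μ[ΔN (k + n + 1)|G n] :=
          condExp_smul (μ := μ) (m := G n) lam (ΔN (k + n + 1))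
        have h2 : μ[ΔN (k + n + 1)|G n] =ᵐ[μ] 0 := hmart _ ht
        refine h.trans ?_
        filter_upwards [h2] with ω hω
        simp only [Pi.smul_apply, smul_eq_mul, hω, Pi.zero_apply, mul_zero]
      have e4 : μ[fun ω => lam ^ 2 / 2 * (ΔN (k + n + 1) ω) ^ 2|G n]
          =ᵐ[μ] fun ω => lam ^ 2 / 2 * V (k + n + 1) ω := by
        have h : μ[fun ω => (lam ^ 2 / 2) • (ΔN (k + n + 1) ω) ^ 2|G n]
            =ᵐ[μ] (lam ^ 2 / 2) • μ[fun ω => (ΔN (k + n + 1) ω) ^ 2|G n] :=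
          condExp_smul (μ := μ) (m := G n) (lam ^ 2 / 2) (fun ω => (ΔN (k + n + 1) ω) ^ 2)
        have h2 : μ[fun ω => (ΔN (k + n + 1) ω) ^ 2|G n] = V (k + n + 1) := rfl
        rw [h2] at h
        exact h
      have e5 := condExp_const (G.le n) (1 : ℝ) (μ := μ)
      filter_upwards [e1, e2, e3, e4] with ω h1 h2 h3 h4
      simp only [Pi.add_apply] at h1 h2 ⊢
      rw [h1, h2, h3, h4, e5]
      simp
    -- put everything together
    rw [hZsplit]
    filter_upwards [hpull, hcond1, hcond2] with ω h1 h2 h3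
    have hf₀nn : 0 ≤ f₀ ω := mul_nonneg (hZpos n ω).le (Real.exp_pos _).le
    have hle : (μ[U|G n]) ω ≤ 1 + lam ^ 2 / 2 * V (k + n + 1) ω := h2.trans_eq h3
    have key : Real.exp (-(lam ^ 2 / 2 * V (k + n + 1) ω))
        * (1 + lam ^ 2 / 2 * V (k + n + 1) ω) ≤ 1 := by
      calc Real.exp (-(lam ^ 2 / 2 * V (k + n + 1) ω)) * (1 + lam ^ 2 / 2 * V (k + n + 1) ω)
          ≤ Real.exp (-(lam ^ 2 / 2 * V (k + n + 1) ω))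
            * Real.exp (lam ^ 2 / 2 * V (k + n + 1) ω) :=
            mul_le_mul_of_nonneg_left
              (by linarith [Real.add_one_le_exp (lam ^ 2 / 2 * V (k + n + 1) ω)])
              (Real.exp_pos _).le
        _ = 1 := by rw [← Real.exp_add]; simp
    calc (μ[f₀ * U|G n]) ω = f₀ ω * (μ[U|G n]) ω := by rw [h1, Pi.mul_apply]
      _ ≤ f₀ ω * (1 + lam ^ 2 / 2 * V (k + n + 1) ω) := mul_le_mul_of_nonneg_left hle hf₀nn
      _ = Z n ω * (Real.exp (-(lam ^ 2 / 2 * V (k + n + 1) ω))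
            * (1 + lam ^ 2 / 2 * V (k + n + 1) ω)) := by rw [hf₀_eval, mul_assoc]
      _ ≤ Z n ω * 1 := mul_le_mul_of_nonneg_left key (hZpos n ω).le
      _ = Z n ω := mul_one _
  have hZsuper : Supermartingale Z G μ := supermartingale_nat hZadapted hZint hstep
  -- the process starts at 1
  have hZ0 : Z 0 = fun _ => (1 : ℝ) := by
    funext ω
    rw [hZ_eval, hS_eval,
      show Finset.Icc (k + 1) (k + 0) = ∅ from Finset.Icc_eq_empty (by omega),
      Finset.sum_empty, mul_zero, Real.exp_zero]
  have hZ0int : ∫ ω, Z 0 ω ∂μ = 1 := by rw [hZ0]; simp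
  -- apply the maximal inequality
  set ε : ℝ≥0 := Real.toNNReal δ⁻¹ with hεdef
  have hεcoe : (ε : ℝ) = δ⁻¹ := Real.coe_toNNReal _ (inv_nonneg.2 hδ.le)
  have hεne : ε ≠ 0 := by
    intro h
    have := hεcoe
    rw [h] at this
    simp only [NNReal.coe_zero] at this
    exact absurd this.symm (ne_of_gt (inv_pos.2 hδ))
  set A : ℕ → Set Ω := fun N =>
    {ω | (ε : ℝ) ≤ (range (N + 1)).sup' nonempty_range_add_one fun m => Z m ω} with hAdef
  have hville : ∀ N, μ (A N) ≤ ENNReal.ofReal δ := by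
    intro N
    have h := villeAux hZsuper (fun n ω => (hZpos n ω).le) ε N
    rw [hZ0int, ENNReal.ofReal_one] at h
    have h2 : (ε : ℝ≥0∞) * μ (A N) ≤ 1 := h
    have hεne' : (ε : ℝ≥0∞) ≠ 0 := by exact_mod_cast hεne
    have hle : μ (A N) ≤ (ε : ℝ≥0∞)⁻¹ := by
      rw [← one_mul (μ (A N)), ← ENNReal.inv_mul_cancel hεne' ENNReal.coe_ne_top, mul_assoc]
      exact le_trans (mul_le_mul_right h2 _) (by rw [mul_one])
    refine hle.trans_eq ?_
    rw [← ENNReal.coe_inv hεne, hεdef, ← Real.toNNReal_inv, inv_inv]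
    rfl
  have hAmono : Monotone A := by
    intro M N hMN ω hω
    simp only [hAdef, Set.mem_setOf_eq] at hω ⊢
    exact hω.trans (Finset.sup'_mono _ (Finset.range_subset_range.2 (by omega)) _)
  -- the bad event is contained in the union of the A N
  have hsubset : {ω | ∀ n ≥ 1, S n ω ≤ Real.log δ⁻¹ / lam}ᶜ ⊆ ⋃ N, A N := by
    intro ω hω
    simp only [Set.mem_compl_iff, Set.mem_setOf_eq] at hω
    push_neg at hω
    obtain ⟨n, hn1, hgt⟩ := hω
    refine Set.mem_iUnion.2 ⟨n, ?_⟩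
    simp only [hAdef, Set.mem_setOf_eq]
    refine le_trans ?_ (Finset.le_sup' (fun m => Z m ω) (Finset.self_mem_range_succ n))
    rw [hεcoe, hZ_eval]
    have hlog : Real.log δ⁻¹ ≤ lam * S n ω := by
      rw [div_lt_iff₀ hlam] at hgt
      linarith
    calc δ⁻¹ = Real.exp (Real.log δ⁻¹) := (Real.exp_log (by positivity)).symm
      _ ≤ Real.exp (lam * S n ω) := Real.exp_le_exp.2 hlog
  have hGoodMeas : MeasurableSet {ω | ∀ n ≥ 1, S n ω ≤ Real.log δ⁻¹ / lam} := by
    have heq : {ω | ∀ n ≥ 1, S n ω ≤ Real.log δ⁻¹ / lam}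
        = ⋂ n, ⋂ _h : 1 ≤ n, {ω | S n ω ≤ Real.log δ⁻¹ / lam} := by
      ext ω; simp [Set.mem_iInter]
    rw [heq]
    exact MeasurableSet.iInter fun n => MeasurableSet.iInter fun _ =>
      measurableSet_le ((hS_sm n).mono (G.le n)).measurable measurable_const
  have hcompl : μ ({ω | ∀ n ≥ 1, S n ω ≤ Real.log δ⁻¹ / lam}ᶜ) ≤ ENNReal.ofReal δ := by
    refine le_trans (measure_mono hsubset) ?_
    rw [Directed.measure_iUnion (hAmono.directed_le)]
    exact iSup_le hville
  -- conclude
  have hfinal : μ {ω | ∀ n ≥ 1, S n ω ≤ Real.log δ⁻¹ / lam}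
      = 1 - μ ({ω | ∀ n ≥ 1, S n ω ≤ Real.log δ⁻¹ / lam}ᶜ) := by
    rw [← prob_compl_eq_one_sub hGoodMeas.compl, compl_compl]
  show ENNReal.ofReal (1 - δ) ≤ μ {ω | ∀ n ≥ 1, S n ω ≤ Real.log δ⁻¹ / lam}
  rw [hfinal]
  calc ENNReal.ofReal (1 - δ) = 1 - ENNReal.ofReal δ := by
        rw [ENNReal.ofReal_sub 1 hδ.le, ENNReal.ofReal_one]
    _ ≤ 1 - μ ({ω | ∀ n ≥ 1, S n ω ≤ Real.log δ⁻¹ / lam}ᶜ) := tsub_le_tsub_left hcompl 1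
end

section
/- For any deterministic sequences (X_t)_{t≥1} in ℝ^d and (y_t)_{t≥1} in ℝ, any θ̂_1 ∈ ℝ^d and any positive definite d×d matrix P_1, the static EKF iterates satisfy, for every θ* ∈ ℝ^d and every n ∈ ℕ: Σ_{t=1}^{n} [ (ℓ'(y_t, θ̂_tᵀX_t)·X_t)ᵀ(θ̂_t − θ*) − (1/2)·(θ̂_t − θ*)ᵀ·(ℓ''(y_t, θ̂_tᵀX_t)·X_tX_tᵀ)·(θ̂_t − θ*) ] ≤ (1/2)·Σ_{t=1}^{n} X_tᵀP_{t+1}X_t·ℓ'(y_t, θ̂_tᵀX_t)² + ‖θ̂_1 − θ*‖²/λ_min(P_1). -/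
open MeasureTheory ProbabilityTheory Matrix Real
open scoped ENNReal

/-- The largest eigenvalue of a (symmetric) matrix. -/
noncomputable def lambdaMax {d : ℕ} (M : Matrix (Fin d) (Fin d) ℝ) : ℝ :=
  sSup {r : ℝ | ∃ v : Fin d → ℝ, v ≠ 0 ∧ M.mulVec v = r • v}

/-- The smallest eigenvalue of a (symmetric) matrix. -/
noncomputable def lambdaMin {d : ℕ} (M : Matrix (Fin d) (Fin d) ℝ) : ℝ :=
  sInf {r : ℝ | ∃ v : Fin d → ℝ, v ≠ 0 ∧ M.mulVec v = r • v}

/-- The Euclidean norm of a vector of `Fin d → ℝ`. -/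
noncomputable def euclNorm {d : ℕ} (v : Fin d → ℝ) : ℝ :=
  Real.sqrt (∑ i, v i ^ 2)

lemma aux_deriv2_nonneg {b : ℝ → ℝ} (hb : ContDiff ℝ 2 b) (hbconv : ConvexOn ℝ Set.univ b) (z : ℝ) :
    0 ≤ deriv (deriv b) z := by
  have hdb : Differentiable ℝ b := hb.differentiable (by norm_num)
  have hdb2 : Differentiable ℝ (deriv b) := by
    have hb' : ContDiff ℝ (1+1) b := by
      convert hb using 2
      norm_num
    exact (contDiff_succ_iff_deriv.mp hb').2.2.differentiable one_ne_zero
  have hmono : Monotone (deriv b) := by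
    have := hbconv.monotoneOn_deriv (fun x _ => hdb.differentiableAt)
    rwa [monotoneOn_univ] at this
  have h := (hdb2 z).hasDerivAt
  rw [hasDerivAt_iff_tendsto_slope] at h
  have h' : Filter.Tendsto (slope (deriv b) z) (nhdsWithin z (Set.Ioi z))
      (nhds (deriv (deriv b) z)) :=
    h.mono_left (nhdsWithin_mono z (fun y hy => ne_of_gt hy))
  refine ge_of_tendsto h' ?_
  filter_upwards [self_mem_nhdsWithin] with w hw
  have h1 : (0:ℝ) ≤ deriv b w - deriv b z := sub_nonneg.2 (hmono (le_of_lt hw))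
  have h2 : (0:ℝ) ≤ w - z := (sub_pos.2 hw).le
  rw [slope_def_field]
  exact div_nonneg h1 h2

lemma aux_vecMulVec_mulVec {d : ℕ} (x v : Fin d → ℝ) :
    (vecMulVec x x).mulVec v = (x ⬝ᵥ v) • x := by
  ext i
  simp [vecMulVec_apply, mulVec, dotProduct, Finset.mul_sum, mul_comm, mul_left_comm]

lemma aux_MAM {d : ℕ} (x : Fin d → ℝ) (A : Matrix (Fin d) (Fin d) ℝ) :
    vecMulVec x x * (A * vecMulVec x x) = (x ⬝ᵥ A.mulVec x) • vecMulVec x x := by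
  ext i j
  simp only [mul_apply, vecMulVec_apply, Matrix.smul_apply, smul_eq_mul, mulVec, dotProduct,
    Finset.mul_sum, Finset.sum_mul]
  refine Finset.sum_congr rfl fun k _ => Finset.sum_congr rfl fun l _ => by ring

lemma aux_quad_lower {d : ℕ} [NeZero d] {P : Matrix (Fin d) (Fin d) ℝ} (hH : P.IsHermitian)
    {j : Fin d} (hj : ∀ i, hH.eigenvalues j ≤ hH.eigenvalues i) (v : Fin d → ℝ) :
    hH.eigenvalues j * (v ⬝ᵥ v) ≤ v ⬝ᵥ P.mulVec v := by
  set U : Matrix (Fin d) (Fin d) ℝ := (hH.eigenvectorUnitary : Matrix (Fin d) (Fin d) ℝ)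
  have hU1 : U * star U = 1 := (Matrix.mem_unitaryGroup_iff).mp hH.eigenvectorUnitary.2
  have hUT : star U = Uᵀ := by
    rw [Matrix.star_eq_conjTranspose, Matrix.conjTranspose_eq_transpose_of_trivial]
  set w : Fin d → ℝ := Uᵀ.mulVec v with hw
  have hvecU : ∀ z : Fin d → ℝ, z ᵥ* U = Uᵀ *ᵥ z := by
    intro z
    rw [← Matrix.transpose_transpose U, Matrix.vecMul_transpose, Matrix.transpose_transpose]
  have hww : w ⬝ᵥ w = v ⬝ᵥ v := by
    rw [hw, Matrix.dotProduct_mulVec, Matrix.vecMul_transpose, Matrix.mulVec_mulVec,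
      ← hUT, hU1, Matrix.one_mulVec]
  have hPdec : P = U * Matrix.diagonal (RCLike.ofReal ∘ hH.eigenvalues) * star U :=
    hH.spectral_theorem
  have hquad : v ⬝ᵥ P.mulVec v = ∑ i, hH.eigenvalues i * (w i)^2 := by
    conv_lhs => rw [hPdec]
    rw [Matrix.mul_assoc, ← Matrix.mulVec_mulVec, Matrix.dotProduct_mulVec, hvecU,
      ← Matrix.mulVec_mulVec, hUT]
    simp only [← hw, dotProduct, Matrix.mulVec_diagonal]
    exact Finset.sum_congr rfl fun i _ => by simp [sq]; ring
  rw [hquad, ← hww]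
  have : hH.eigenvalues j * (w ⬝ᵥ w) = ∑ i, hH.eigenvalues j * (w i)^2 := by
    simp [dotProduct, Finset.mul_sum, sq]
  rw [this]
  exact Finset.sum_le_sum fun i _ => by nlinarith [sq_nonneg (w i), hj i]

lemma aux_lambdaMin_eq {d : ℕ} [NeZero d] {P : Matrix (Fin d) (Fin d) ℝ} (hP : P.PosDef)
    {j : Fin d} (hj : ∀ i, hP.1.eigenvalues j ≤ hP.1.eigenvalues i) :
    lambdaMin P = hP.1.eigenvalues j := by
  set S := {r : ℝ | ∃ v : Fin d → ℝ, v ≠ 0 ∧ P.mulVec v = r • v} with hS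
  have hmem : ∀ i, hP.1.eigenvalues i ∈ S := by
    intro i
    refine ⟨hP.1.eigenvectorBasis i, ?_, hP.1.mulVec_eigenvectorBasis i⟩
    intro h0
    exact hP.1.eigenvectorBasis.orthonormal.ne_zero i (by ext k; exact congrFun h0 k)
  have hlb : ∀ r ∈ S, hP.1.eigenvalues j ≤ r := by
    rintro r ⟨v, hv0, hv⟩
    have hq := aux_quad_lower hP.1 hj v
    rw [hv] at hq
    have hvv : 0 < v ⬝ᵥ v := by
      have h0 : 0 ≤ v ⬝ᵥ v := Finset.sum_nonneg fun i _ => mul_self_nonneg (v i)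
      have hne : v ⬝ᵥ v ≠ 0 := fun h => hv0 ((dotProduct_self_eq_zero).mp h)
      exact lt_of_le_of_ne h0 (Ne.symm hne)
    have hsm : v ⬝ᵥ r • v = r * (v ⬝ᵥ v) := by
      simp [dotProduct, Finset.mul_sum]
      exact Finset.sum_congr rfl fun i _ => by ring
    rw [hsm] at hq
    exact le_of_mul_le_mul_right (by linarith) hvv
  refine le_antisymm (csInf_le ⟨_, hlb⟩ (hmem j)) (le_csInf ⟨_, hmem j⟩ hlb)

lemma aux_quad_inv_le {d : ℕ} {P : Matrix (Fin d) (Fin d) ℝ} (hP : P.PosDef) (e : Fin d → ℝ) :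
    e ⬝ᵥ P⁻¹.mulVec e ≤ euclNorm e ^ 2 / lambdaMin P := by
  rcases Nat.eq_zero_or_pos d with hd | hd
  · subst hd
    have h1 : e ⬝ᵥ P⁻¹.mulVec e = 0 := by simp [dotProduct]
    have h2 : euclNorm e = 0 := by simp [euclNorm]
    rw [h1, h2]
    simp
  · haveI : NeZero d := ⟨hd.ne'⟩
    obtain ⟨j, hj⟩ := Finite.exists_min hP.1.eigenvalues
    have hlam : lambdaMin P = hP.1.eigenvalues j := aux_lambdaMin_eq hP hj
    have hmupos : 0 < lambdaMin P := hlam ▸ hP.eigenvalues_pos j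
    set mu := lambdaMin P with hmudef
    set w : Fin d → ℝ := P⁻¹.mulVec e with hwdef
    have hdet : IsUnit P.det := isUnit_iff_ne_zero.mpr hP.det_pos.ne'
    have hPw : P.mulVec w = e := by
      rw [hwdef, Matrix.mulVec_mulVec, Matrix.mul_nonsing_inv _ hdet, Matrix.one_mulVec]
    have h1 : e ⬝ᵥ w = w ⬝ᵥ P.mulVec w := by
      conv_lhs => rw [← hPw]
      rw [dotProduct_comm]
    have h2 : mu * (w ⬝ᵥ w) ≤ e ⬝ᵥ w := by
      rw [h1, hlam]; exact aux_quad_lower hP.1 hj w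
    have hCS : e ⬝ᵥ w ≤ euclNorm e * euclNorm w := by
      have hcs := Finset.sum_mul_sq_le_sq_mul_sq Finset.univ e w
      have habs : e ⬝ᵥ w ≤ Real.sqrt ((∑ i, e i * w i)^2) := by
        rw [Real.sqrt_sq_eq_abs]; exact le_abs_self _
      refine habs.trans ?_
      rw [euclNorm, euclNorm, ← Real.sqrt_mul (Finset.sum_nonneg fun i _ => sq_nonneg _)]
      exact Real.sqrt_le_sqrt hcs
    have hww : w ⬝ᵥ w = euclNorm w ^ 2 := by
      rw [euclNorm, Real.sq_sqrt (Finset.sum_nonneg fun i _ => sq_nonneg _)]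
      simp [dotProduct, sq]
    have hnw : 0 ≤ euclNorm w := Real.sqrt_nonneg _
    have hne : 0 ≤ euclNorm e := Real.sqrt_nonneg _
    by_cases hw0 : euclNorm w = 0
    · have hle : e ⬝ᵥ w ≤ 0 := by rw [hw0, mul_zero] at hCS; exact hCS
      have : 0 ≤ euclNorm e ^ 2 / mu := div_nonneg (sq_nonneg _) hmupos.le
      linarith
    · have hnw' : 0 < euclNorm w := lt_of_le_of_ne hnw (Ne.symm hw0)
      have hstep : mu * euclNorm w ≤ euclNorm e := by
        have h3 : mu * euclNorm w * euclNorm w ≤ euclNorm e * euclNorm w := by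
          nlinarith [h2, hCS, hww]
        exact le_of_mul_le_mul_right h3 hnw'
      rw [le_div_iff₀ hmupos]
      have t1 : 0 ≤ euclNorm e * (euclNorm e - mu * euclNorm w) :=
        mul_nonneg hne (by linarith)
      have t2 : 0 ≤ mu * (euclNorm e * euclNorm w - e ⬝ᵥ w) :=
        mul_nonneg hmupos.le (by linarith)
      nlinarith [t1, t2]

lemma aux_vecMulVec_posSemidef {d : ℕ} (x : Fin d → ℝ) {c : ℝ} (hc : 0 ≤ c) :
    (c • vecMulVec x x).PosSemidef := by
  rw [Matrix.posSemidef_iff_dotProduct_mulVec]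
  constructor
  · ext i j
    simp [Matrix.conjTranspose_apply, vecMulVec_apply, mul_comm]
  · intro v
    have h : (vecMulVec x x).mulVec v = (x ⬝ᵥ v) • x := by
      ext i
      simp [vecMulVec_apply, mulVec, dotProduct, Finset.mul_sum, mul_comm, mul_left_comm]
    rw [Matrix.smul_mulVec, h]
    simp only [star_trivial, dotProduct_smul, smul_eq_mul]
    rw [dotProduct_comm v x]
    exact mul_nonneg hc (mul_self_nonneg _)

lemma aux_mul_inv {d : ℕ} {Pt : Matrix (Fin d) (Fin d) ℝ} (hPt : Pt.PosDef)
    (x : Fin d → ℝ) {c : ℝ} (hc : 0 ≤ c) :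
    (Pt - (c / (1 + c * (x ⬝ᵥ Pt.mulVec x))) • (Pt * vecMulVec x x * Pt)) *
      (Pt⁻¹ + c • vecMulVec x x) = 1 := by
  set s := x ⬝ᵥ Pt.mulVec x with hs
  have hs0 : 0 ≤ s := by
    have h := hPt.posSemidef.dotProduct_mulVec_nonneg x
    simpa [hs] using h
  have hden : (0:ℝ) < 1 + c * s := by nlinarith
  have hdet : IsUnit Pt.det := isUnit_iff_ne_zero.mpr hPt.det_pos.ne'
  have hPP : Pt * Pt⁻¹ = 1 := Matrix.mul_nonsing_inv _ hdet
  set M := vecMulVec x x with hMdef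
  have hMAM : M * (Pt * M) = s • M := aux_MAM x Pt
  set cc := c / (1 + c * s) with hcc
  have e1 : (cc • (Pt * M * Pt)) * Pt⁻¹ = cc • (Pt * M) := by
    rw [Matrix.smul_mul, Matrix.mul_assoc, hPP, Matrix.mul_one]
  have e2a : (Pt * M * Pt) * M = s • (Pt * M) := by
    simp only [Matrix.mul_assoc]
    rw [hMAM, Matrix.mul_smul]
  have e2 : (cc • (Pt * M * Pt)) * (c • M) = (cc * (c * s)) • (Pt * M) := by
    rw [Matrix.smul_mul, Matrix.mul_smul, e2a, smul_smul, smul_smul, mul_assoc]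
  rw [Matrix.sub_mul, Matrix.mul_add, Matrix.mul_add, hPP, e1, e2, Matrix.mul_smul]
  have hcoef : cc + cc * (c * s) = c := by
    rw [hcc]; field_simp
  have : c • (Pt * M) - (cc • (Pt * M) + (cc * (c * s)) • (Pt * M)) = 0 := by
    rw [← add_smul, hcoef, sub_self]
  calc 1 + c • (Pt * M) - (cc • (Pt * M) + (cc * (c * s)) • (Pt * M))
      = 1 + (c • (Pt * M) - (cc • (Pt * M) + (cc * (c * s)) • (Pt * M))) := by abel
    _ = 1 := by rw [this, add_zero]

lemma aux_step {d : ℕ} {Pt Pn : Matrix (Fin d) (Fin d) ℝ} (hPt : Pt.PosDef) (x : Fin d → ℝ)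
    {c : ℝ} (hc : 0 ≤ c)
    (hPn : Pn = Pt - (c / (1 + c * (x ⬝ᵥ Pt.mulVec x))) • (Pt * vecMulVec x x * Pt)) :
    Pn.PosDef ∧ Pn⁻¹ = Pt⁻¹ + c • vecMulVec x x := by
  have hmul : Pn * (Pt⁻¹ + c • vecMulVec x x) = 1 := by
    rw [hPn]; exact aux_mul_inv hPt x hc
  have hQ' : (Pt⁻¹ + c • vecMulVec x x).PosDef :=
    hPt.inv.add_posSemidef (aux_vecMulVec_posSemidef x hc)
  have hQinv : (Pt⁻¹ + c • vecMulVec x x)⁻¹ = Pn := Matrix.inv_eq_left_inv hmul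
  have hdetQ : IsUnit (Pt⁻¹ + c • vecMulVec x x).det :=
    isUnit_iff_ne_zero.mpr hQ'.det_pos.ne'
  refine ⟨hQinv ▸ hQ'.inv, ?_⟩
  rw [← hQinv, Matrix.nonsing_inv_nonsing_inv _ hdetQ]

lemma aux_quad_expand {d : ℕ} {Pn Qt : Matrix (Fin d) (Fin d) ℝ} (hPn : Pn.PosDef)
    {c : ℝ} {x : Fin d → ℝ} (hinv : Pn⁻¹ = Qt + c • vecMulVec x x)
    (e : Fin d → ℝ) (l : ℝ) :
    (e - l • Pn.mulVec x) ⬝ᵥ (Pn⁻¹).mulVec (e - l • Pn.mulVec x)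
      = e ⬝ᵥ Qt.mulVec e + e ⬝ᵥ (c • vecMulVec x x).mulVec e
        - 2 * (l * (x ⬝ᵥ e)) + l^2 * (x ⬝ᵥ Pn.mulVec x) := by
  have hdet : IsUnit Pn.det := isUnit_iff_ne_zero.mpr hPn.det_pos.ne'
  have hQP : Pn⁻¹ * Pn = 1 := Matrix.nonsing_inv_mul _ hdet
  have hsym : (Pn⁻¹)ᵀ = Pn⁻¹ := by
    rw [← Matrix.conjTranspose_eq_transpose_of_trivial]
    exact hPn.inv.1
  have hAu : Pn⁻¹.mulVec (Pn.mulVec x) = x := by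
    rw [Matrix.mulVec_mulVec, hQP, Matrix.one_mulVec]
  have cross2 : (Pn.mulVec x) ⬝ᵥ Pn⁻¹.mulVec e = x ⬝ᵥ e := by
    rw [Matrix.dotProduct_mulVec]
    have h2 : (Pn.mulVec x) ᵥ* Pn⁻¹ = Pn⁻¹ *ᵥ (Pn.mulVec x) := by
      conv_lhs => rw [← hsym]
      rw [Matrix.vecMul_transpose]
    rw [h2, hAu]
  have quad : (Pn.mulVec x) ⬝ᵥ Pn⁻¹.mulVec (Pn.mulVec x) = x ⬝ᵥ Pn.mulVec x := by
    rw [hAu, dotProduct_comm]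
  have hQe : (Pn⁻¹).mulVec e = Qt.mulVec e + (c • vecMulVec x x).mulVec e := by
    rw [hinv, Matrix.add_mulVec]
  have hex : e ⬝ᵥ x = x ⬝ᵥ e := dotProduct_comm e x
  simp only [Matrix.mulVec_sub, Matrix.mulVec_smul, sub_dotProduct,
    dotProduct_sub, smul_dotProduct, dotProduct_smul, smul_eq_mul,
    hAu, cross2, quad]
  rw [hQe, dotProduct_add, hex, dotProduct_comm (Pn *ᵥ x) x]
  ring

/-- **Lemma (recursive bound for the static EKF).** For any deterministic data sequences, any
initialization `θ̂₁, P₁ ≻ 0`, the static EKF iterates satisfy, for every `θ*` and `n`,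
`∑_{t=1}^n [(ℓ'(y_t, θ̂_tᵀX_t)X_t)ᵀ(θ̂_t − θ*) − ½ (θ̂_t − θ*)ᵀ(ℓ''(y_t, θ̂_tᵀX_t)X_tX_tᵀ)(θ̂_t − θ*)]
  ≤ ½ ∑_{t=1}^n X_tᵀP_{t+1}X_t ℓ'(y_t, θ̂_tᵀX_t)² + ‖θ̂₁ − θ*‖²/λ_min(P₁)`,
where `ℓ'(y,z) = (b'(z) − y)/a` and `ℓ''(y,z) = b''(z)/a`. -/
theorem ekf_recursive_bound {d : ℕ}
    (a : ℝ) (ha : 0 < a) (b : ℝ → ℝ) (hb : ContDiff ℝ 2 b) (hbconv : ConvexOn ℝ Set.univ b)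
    (X : ℕ → Fin d → ℝ) (y : ℕ → ℝ)
    (θhat : ℕ → Fin d → ℝ) (P : ℕ → Matrix (Fin d) (Fin d) ℝ)
    (hP1 : (P 1).PosDef)
    (hPrec : ∀ t ≥ 1, P (t + 1) =
      P t - ((deriv (deriv b) (θhat t ⬝ᵥ X t) / a) /
          (1 + (deriv (deriv b) (θhat t ⬝ᵥ X t) / a) * (X t ⬝ᵥ (P t).mulVec (X t)))) •
        (P t * vecMulVec (X t) (X t) * P t))
    (hθrec : ∀ t ≥ 1, θhat (t + 1) =
      θhat t + ((y t - deriv b (θhat t ⬝ᵥ X t)) / a) • (P (t + 1)).mulVec (X t))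
    (θstar : Fin d → ℝ) (n : ℕ) :
    ∑ t ∈ Finset.Icc 1 n,
        ((((deriv b (θhat t ⬝ᵥ X t) - y t) / a) • X t) ⬝ᵥ (θhat t - θstar)
          - 1 / 2 * ((θhat t - θstar) ⬝ᵥ
              ((deriv (deriv b) (θhat t ⬝ᵥ X t) / a) • vecMulVec (X t) (X t)).mulVec
                (θhat t - θstar)))
      ≤ 1 / 2 * ∑ t ∈ Finset.Icc 1 n,
          (X t ⬝ᵥ (P (t + 1)).mulVec (X t)) * ((deriv b (θhat t ⬝ᵥ X t) - y t) / a) ^ 2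
        + euclNorm (θhat 1 - θstar) ^ 2 / lambdaMin (P 1) := by
  classical
  have hαnn : ∀ t : ℕ, 0 ≤ deriv (deriv b) (θhat t ⬝ᵥ X t) / a :=
    fun t => div_nonneg (aux_deriv2_nonneg hb hbconv _) ha.le
  -- positive definiteness and inverse recursion
  have hmain : ∀ t, 1 ≤ t → (P t).PosDef ∧
      (P (t+1))⁻¹ = (P t)⁻¹
        + (deriv (deriv b) (θhat t ⬝ᵥ X t) / a) • vecMulVec (X t) (X t) := by
    intro t ht
    induction t, ht using Nat.le_induction with
    | base => exact ⟨hP1, (aux_step hP1 (X 1) (hαnn 1) (hPrec 1 le_rfl)).2⟩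
    | succ t ht ih =>
        have hPt1 : (P (t+1)).PosDef := (aux_step ih.1 (X t) (hαnn t) (hPrec t ht)).1
        exact ⟨hPt1, (aux_step hPt1 (X (t+1)) (hαnn (t+1)) (hPrec (t+1) (by omega))).2⟩
  set V : ℕ → ℝ := fun t => (θhat t - θstar) ⬝ᵥ ((P t)⁻¹).mulVec (θhat t - θstar) with hVdef
  -- per-step identity
  have hident : ∀ t, 1 ≤ t →
      (((deriv b (θhat t ⬝ᵥ X t) - y t) / a) • X t) ⬝ᵥ (θhat t - θstar)
        - 1 / 2 * ((θhat t - θstar) ⬝ᵥ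
            ((deriv (deriv b) (θhat t ⬝ᵥ X t) / a) • vecMulVec (X t) (X t)).mulVec
              (θhat t - θstar))
      = 1/2 * V t - 1/2 * V (t+1)
        + 1/2 * ((X t ⬝ᵥ (P (t+1)).mulVec (X t))
            * ((deriv b (θhat t ⬝ᵥ X t) - y t) / a) ^ 2) := by
    intro t ht
    have hPt : (P t).PosDef := (hmain t ht).1
    have hPt1 : (P (t+1)).PosDef := (aux_step hPt (X t) (hαnn t) (hPrec t ht)).1
    have hinv := (hmain t ht).2
    have he : θhat (t+1) - θstar
        = (θhat t - θstar)
          - ((deriv b (θhat t ⬝ᵥ X t) - y t) / a) • (P (t+1)).mulVec (X t) := by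
      rw [hθrec t ht]
      ext i
      simp only [Pi.add_apply, Pi.sub_apply, Pi.smul_apply, smul_eq_mul]
      ring
    have hexp := aux_quad_expand hPt1 hinv (θhat t - θstar)
      ((deriv b (θhat t ⬝ᵥ X t) - y t) / a)
    have hVt1 : V (t+1)
        = V t + (θhat t - θstar) ⬝ᵥ
            ((deriv (deriv b) (θhat t ⬝ᵥ X t) / a) • vecMulVec (X t) (X t)).mulVec
              (θhat t - θstar)
          - 2 * (((deriv b (θhat t ⬝ᵥ X t) - y t) / a) * (X t ⬝ᵥ (θhat t - θstar)))
          + ((deriv b (θhat t ⬝ᵥ X t) - y t) / a)^2 * (X t ⬝ᵥ (P (t+1)).mulVec (X t)) := by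
      show (θhat (t+1) - θstar) ⬝ᵥ ((P (t+1))⁻¹).mulVec (θhat (t+1) - θstar) = _
      rw [he, hexp]
    have h1 : (((deriv b (θhat t ⬝ᵥ X t) - y t) / a) • X t) ⬝ᵥ (θhat t - θstar)
        = ((deriv b (θhat t ⬝ᵥ X t) - y t) / a) * (X t ⬝ᵥ (θhat t - θstar)) := by
      rw [smul_dotProduct, smul_eq_mul]
    rw [h1, hVt1]
    ring
  -- telescoping sum
  have hsum : ∀ m : ℕ,
      ∑ t ∈ Finset.Icc 1 m,
        ((((deriv b (θhat t ⬝ᵥ X t) - y t) / a) • X t) ⬝ᵥ (θhat t - θstar)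
          - 1 / 2 * ((θhat t - θstar) ⬝ᵥ
              ((deriv (deriv b) (θhat t ⬝ᵥ X t) / a) • vecMulVec (X t) (X t)).mulVec
                (θhat t - θstar)))
      = 1/2 * V 1 - 1/2 * V (m+1)
        + 1/2 * ∑ t ∈ Finset.Icc 1 m,
            (X t ⬝ᵥ (P (t + 1)).mulVec (X t)) * ((deriv b (θhat t ⬝ᵥ X t) - y t) / a) ^ 2 := by
    intro m
    induction m with
    | zero => simp
    | succ m ih =>
        rw [Finset.sum_Icc_succ_top (by omega : 1 ≤ m+1),
          Finset.sum_Icc_succ_top (by omega : 1 ≤ m+1), ih, hident (m+1) (by omega)]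
        ring
  rw [hsum n]
  have hV1le : V 1 ≤ euclNorm (θhat 1 - θstar) ^ 2 / lambdaMin (P 1) :=
    aux_quad_inv_le hP1 (θhat 1 - θstar)
  have hVpos : ∀ t, 1 ≤ t → 0 ≤ V t := by
    intro t ht
    have hPt := (hmain t ht).1
    have h := hPt.inv.posSemidef.dotProduct_mulVec_nonneg (θhat t - θstar)
    rw [star_trivial] at h
    exact h
  have h1 := hVpos 1 le_rfl
  have h2 := hVpos (n+1) (by omega)
  linarith
end

section
/- Let (X, y) be a random pair in ℝ^d × ℝ with ‖X‖ ≤ D_X almost surely and y almost surely bounded, and suppose θ* satisfies the first-order condition E[(y − b'(θ*ᵀX))·X] = 0. Fix θ ∈ ℝ^d and let ρ > 0 be such that almost surely b''(θ₁ᵀX) ≥ ρ·b''(θ₂ᵀX) for all θ₁, θ₂ ∈ ℝ^d with ‖θ₁ − θ*‖ ≤ ‖θ − θ*‖ and ‖θ₂ − θ*‖ ≤ ‖θ − θ*‖. Then E[ℓ'(y, θᵀX)·X]ᵀ·(θ − θ*) ≥ ρ·(θ − θ*)ᵀ·E[ℓ''(y, θᵀX)·X Xᵀ]·(θ − θ*).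 -/
open MeasureTheory ProbabilityTheory Matrix Real
open scoped ENNReal

lemma euclNorm_nonneg {d : ℕ} (v : Fin d → ℝ) : 0 ≤ euclNorm v := Real.sqrt_nonneg _

lemma euclNorm_smul {d : ℕ} (t : ℝ) (v : Fin d → ℝ) :
    euclNorm (t • v) = |t| * euclNorm v := by
  unfold euclNorm
  rw [← Real.sqrt_sq_eq_abs, ← Real.sqrt_mul (sq_nonneg t), Finset.mul_sum]
  congr 1
  refine Finset.sum_congr rfl fun i _ => ?_
  simp [mul_pow]

lemma abs_dotProduct_le {d : ℕ} (w x : Fin d → ℝ) :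
    |w ⬝ᵥ x| ≤ euclNorm w * euclNorm x := by
  have h := Finset.sum_mul_sq_le_sq_mul_sq Finset.univ w x
  rw [← Real.sqrt_sq_eq_abs]
  unfold euclNorm
  rw [← Real.sqrt_mul (by positivity)]
  exact Real.sqrt_le_sqrt (by simpa [dotProduct] using h)

lemma abs_apply_le_euclNorm {d : ℕ} (x : Fin d → ℝ) (i : Fin d) :
    |x i| ≤ euclNorm x := by
  rw [← Real.sqrt_sq_eq_abs]
  exact Real.sqrt_le_sqrt (Finset.single_le_sum (fun j _ => sq_nonneg (x j)) (Finset.mem_univ i))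

lemma integrable_of_ae_bound {Ω : Type*} [MeasurableSpace Ω] {μ : Measure Ω}
    [IsProbabilityMeasure μ] {F : Ω → ℝ} (hm : AEStronglyMeasurable F μ) (C : ℝ)
    (h : ∀ᵐ ω ∂μ, |F ω| ≤ C) : Integrable F μ :=
  (integrable_const C).mono' hm (h.mono fun ω hω => by simpa [Real.norm_eq_abs] using hω)

lemma mvt_ineq (b : ℝ → ℝ) (hb : ContDiff ℝ 2 b) (ρ : ℝ) (z0 z1 : ℝ)
    (h : ∀ c ∈ Set.Ioo (min z0 z1) (max z0 z1), ρ * deriv (deriv b) z1 ≤ deriv (deriv b) c) :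
    ρ * deriv (deriv b) z1 * (z1 - z0) ^ 2 ≤ (deriv b z1 - deriv b z0) * (z1 - z0) := by
  have hb1 : ContDiff ℝ 1 (deriv b) :=
    (contDiff_succ_iff_deriv.mp (show ContDiff ℝ (1 + 1) b by norm_num [hb])).2.2
  have hcont : Continuous (deriv b) := hb1.continuous
  have hdiff : Differentiable ℝ (deriv b) := hb1.differentiable one_ne_zero
  rcases lt_trichotomy z0 z1 with hlt | heq | hgt
  · obtain ⟨c, hc, hceq⟩ := exists_deriv_eq_slope (deriv b) hlt hcont.continuousOn
      (hdiff.differentiableOn)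
    have hc' : ρ * deriv (deriv b) z1 ≤ deriv (deriv b) c := by
      apply h c; rw [min_eq_left hlt.le, max_eq_right hlt.le]; exact hc
    rw [eq_div_iff (sub_ne_zero.mpr hlt.ne')] at hceq
    nlinarith [sq_nonneg (z1 - z0)]
  · simp [heq]
  · obtain ⟨c, hc, hceq⟩ := exists_deriv_eq_slope (deriv b) hgt hcont.continuousOn
      (hdiff.differentiableOn)
    have hc' : ρ * deriv (deriv b) z1 ≤ deriv (deriv b) c := by
      apply h c; rw [min_eq_right hgt.le, max_eq_left hgt.le]; exact hc
    rw [eq_div_iff (sub_ne_zero.mpr hgt.ne')] at hceq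
    nlinarith [sq_nonneg (z1 - z0)]

/-- **Proposition (comparison of the first- and second-order terms).** Let `(X, y)` be a random
pair with `‖X‖ ≤ D_X` a.s. and `y` a.s. bounded, and let `θ*` satisfy the first-order condition
`E[(y − b'(θ*ᵀX))X] = 0`. Fix `θ` and `ρ > 0` such that a.s.
`b''(θ₁ᵀX) ≥ ρ b''(θ₂ᵀX)` for all `θ₁, θ₂` with `‖θᵢ − θ*‖ ≤ ‖θ − θ*‖`. Then
`E[ℓ'(y, θᵀX)X]ᵀ(θ − θ*) ≥ ρ (θ − θ*)ᵀ E[ℓ''(y, θᵀX)XXᵀ] (θ − θ*)`,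
where `ℓ'(y,z) = (b'(z) − y)/a` and `ℓ''(y,z) = b''(z)/a`. -/
theorem comparison_first_second_order
    {Ω : Type*} [MeasurableSpace Ω] (μ : Measure Ω) [IsProbabilityMeasure μ] {d : ℕ}
    (a : ℝ) (ha : 0 < a) (b : ℝ → ℝ) (hb : ContDiff ℝ 2 b) (hbconv : ConvexOn ℝ Set.univ b)
    (X : Ω → Fin d → ℝ) (y : Ω → ℝ) (hXmeas : Measurable X) (hymeas : Measurable y)
    (DX : ℝ) (hDX : 0 < DX) (hXbdd : ∀ᵐ ω ∂μ, euclNorm (X ω) ≤ DX)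
    (B : ℝ) (hybdd : ∀ᵐ ω ∂μ, |y ω| ≤ B)
    (θstar : Fin d → ℝ)
    (hfoc : ∀ i, ∫ ω, (y ω - deriv b (θstar ⬝ᵥ X ω)) * X ω i ∂μ = 0)
    (θ : Fin d → ℝ) (ρ : ℝ) (hρ : 0 < ρ)
    (hass : ∀ᵐ ω ∂μ, ∀ θ₁ θ₂ : Fin d → ℝ,
      euclNorm (θ₁ - θstar) ≤ euclNorm (θ - θstar) →
      euclNorm (θ₂ - θstar) ≤ euclNorm (θ - θstar) →
      ρ * deriv (deriv b) (θ₂ ⬝ᵥ X ω) ≤ deriv (deriv b) (θ₁ ⬝ᵥ X ω)) :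
    ρ * ((θ - θstar) ⬝ᵥ
        (Matrix.of fun i j =>
          ∫ ω, (deriv (deriv b) (θ ⬝ᵥ X ω) / a) * (X ω i * X ω j) ∂μ).mulVec (θ - θstar))
      ≤ (fun i => ∫ ω, ((deriv b (θ ⬝ᵥ X ω) - y ω) / a) * X ω i ∂μ) ⬝ᵥ (θ - θstar) := by
  classical
  have hae : (ae μ).NeBot := ae_neBot.mpr (IsProbabilityMeasure.ne_zero μ)
  have hBn : 0 ≤ B := by
    obtain ⟨ω, hω⟩ := hybdd.exists
    exact (abs_nonneg _).trans hω
  set v : Fin d → ℝ := θ - θstar with hv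
  -- continuity / measurability
  have hb1 : ContDiff ℝ 1 (deriv b) :=
    (contDiff_succ_iff_deriv.mp (show ContDiff ℝ (1 + 1) b by norm_num [hb])).2.2
  have hb'c : Continuous (deriv b) := hb1.continuous
  have hb''c : Continuous (deriv (deriv b)) := (contDiff_one_iff_deriv.mp hb1).2
  have hXi : ∀ i, Measurable fun ω => X ω i := fun i => (measurable_pi_apply i).comp hXmeas
  have hdot : ∀ (w : Fin d → ℝ), Measurable fun ω => w ⬝ᵥ X ω := by
    intro w
    simp only [dotProduct]
    exact Finset.measurable_sum _ fun i _ => measurable_const.mul (hXi i)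
  have mg1 : Measurable fun ω => deriv b (θ ⬝ᵥ X ω) := hb'c.measurable.comp (hdot θ)
  have mg0 : Measurable fun ω => deriv b (θstar ⬝ᵥ X ω) := hb'c.measurable.comp (hdot θstar)
  have mg2 : Measurable fun ω => deriv (deriv b) (θ ⬝ᵥ X ω) := hb''c.measurable.comp (hdot θ)
  -- bounds
  set R : ℝ := max (euclNorm θ * DX) (euclNorm θstar * DX) with hR
  have hR0 : 0 ≤ R :=
    le_max_of_le_left (mul_nonneg (euclNorm_nonneg θ) hDX.le)
  obtain ⟨C1, hC1⟩ := (isCompact_Icc (a := -R) (b := R)).exists_bound_of_continuousOn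
    hb'c.continuousOn
  obtain ⟨C2, hC2⟩ := (isCompact_Icc (a := -R) (b := R)).exists_bound_of_continuousOn
    hb''c.continuousOn
  simp only [Real.norm_eq_abs] at hC1 hC2
  have hC1n : 0 ≤ C1 := (abs_nonneg _).trans (hC1 0 ⟨neg_nonpos.mpr hR0, hR0⟩)
  have hC2n : 0 ≤ C2 := (abs_nonneg _).trans (hC2 0 ⟨neg_nonpos.mpr hR0, hR0⟩)
  set K : ℝ := euclNorm v * DX with hK
  have hKn : 0 ≤ K := mul_nonneg (euclNorm_nonneg v) hDX.le
  -- combined a.e. bound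
  have hbig : ∀ᵐ ω ∂μ,
      |deriv b (θ ⬝ᵥ X ω)| ≤ C1 ∧ |deriv b (θstar ⬝ᵥ X ω)| ≤ C1 ∧
      |deriv (deriv b) (θ ⬝ᵥ X ω)| ≤ C2 ∧ |v ⬝ᵥ X ω| ≤ K ∧ |y ω| ≤ B ∧
      ∀ i, |X ω i| ≤ DX := by
    filter_upwards [hXbdd, hybdd] with ω hX hy
    have hXn : 0 ≤ euclNorm (X ω) := euclNorm_nonneg _
    have hw : ∀ w : Fin d → ℝ, |w ⬝ᵥ X ω| ≤ euclNorm w * DX := fun w =>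
      (abs_dotProduct_le w (X ω)).trans
        (mul_le_mul_of_nonneg_left hX (euclNorm_nonneg w))
    have hθ : θ ⬝ᵥ X ω ∈ Set.Icc (-R) R := by
      have := hw θ
      have h1 : euclNorm θ * DX ≤ R := le_max_left _ _
      rw [abs_le] at this
      constructor <;> [linarith [this.1]; linarith [this.2]]
    have hθs : θstar ⬝ᵥ X ω ∈ Set.Icc (-R) R := by
      have := hw θstar
      have h1 : euclNorm θstar * DX ≤ R := le_max_right _ _
      rw [abs_le] at this
      constructor <;> [linarith [this.1]; linarith [this.2]]
    exact ⟨hC1 _ hθ, hC1 _ hθs, hC2 _ hθ, hw v, hy,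
      fun i => (abs_apply_le_euclNorm (X ω) i).trans hX⟩
  -- integrability
  have hIa : ∀ i j, Integrable (fun ω =>
      (deriv (deriv b) (θ ⬝ᵥ X ω) / a) * (X ω i * X ω j)) μ := by
    intro i j
    refine integrable_of_ae_bound (((mg2.div_const a).mul
      ((hXi i).mul (hXi j))).aestronglyMeasurable) (C2 / a * (DX * DX)) ?_
    filter_upwards [hbig] with ω hω
    rw [abs_mul, abs_div, abs_of_pos ha, abs_mul]
    exact mul_le_mul ((div_le_div_iff_of_pos_right ha).mpr hω.2.2.1)
      (mul_le_mul (hω.2.2.2.2.2 i) (hω.2.2.2.2.2 j) (abs_nonneg _) hDX.le)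
      (by positivity) (by positivity)
  have hIb : Integrable (fun ω =>
      (deriv (deriv b) (θ ⬝ᵥ X ω) / a) * (v ⬝ᵥ X ω) ^ 2) μ := by
    refine integrable_of_ae_bound (((mg2.div_const a).mul
      ((hdot v).pow measurable_const)).aestronglyMeasurable) (C2 / a * K ^ 2) ?_
    filter_upwards [hbig] with ω hω
    rw [abs_mul, abs_div, abs_of_pos ha, abs_pow]
    exact mul_le_mul ((div_le_div_iff_of_pos_right ha).mpr hω.2.2.1)
      (pow_le_pow_left₀ (abs_nonneg _) hω.2.2.2.1 2) (by positivity) (by positivity)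
  have hIc : ∀ i, Integrable (fun ω =>
      ((deriv b (θ ⬝ᵥ X ω) - y ω) / a) * X ω i) μ := by
    intro i
    refine integrable_of_ae_bound (((mg1.sub hymeas).div_const a).mul
      (hXi i)).aestronglyMeasurable ((C1 + B) / a * DX) ?_
    filter_upwards [hbig] with ω hω
    rw [abs_mul, abs_div, abs_of_pos ha]
    exact mul_le_mul ((div_le_div_iff_of_pos_right ha).mpr
      ((abs_sub _ _).trans (add_le_add hω.1 hω.2.2.2.2.1)))
      (hω.2.2.2.2.2 i) (abs_nonneg _) (by positivity)
  have hId : ∀ i, Integrable (fun ω =>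
      (y ω - deriv b (θstar ⬝ᵥ X ω)) * X ω i) μ := by
    intro i
    refine integrable_of_ae_bound ((hymeas.sub mg0).mul (hXi i)).aestronglyMeasurable
      ((B + C1) * DX) ?_
    filter_upwards [hbig] with ω hω
    rw [abs_mul]
    exact mul_le_mul ((abs_sub _ _).trans (add_le_add hω.2.2.2.2.1 hω.2.1))
      (hω.2.2.2.2.2 i) (abs_nonneg _) (by positivity)
  have hIe : Integrable (fun ω =>
      ((deriv b (θ ⬝ᵥ X ω) - deriv b (θstar ⬝ᵥ X ω)) / a) * (v ⬝ᵥ X ω)) μ := by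
    refine integrable_of_ae_bound (((mg1.sub mg0).div_const a).mul
      (hdot v)).aestronglyMeasurable ((C1 + C1) / a * K) ?_
    filter_upwards [hbig] with ω hω
    rw [abs_mul, abs_div, abs_of_pos ha]
    exact mul_le_mul ((div_le_div_iff_of_pos_right ha).mpr
      ((abs_sub _ _).trans (add_le_add hω.1 hω.2.1)))
      hω.2.2.2.1 (abs_nonneg _) (by positivity)
  have hIf : Integrable (fun ω =>
      (y ω - deriv b (θstar ⬝ᵥ X ω)) * (v ⬝ᵥ X ω)) μ := by
    refine integrable_of_ae_bound ((hymeas.sub mg0).mul (hdot v)).aestronglyMeasurable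
      ((B + C1) * K) ?_
    filter_upwards [hbig] with ω hω
    rw [abs_mul]
    exact mul_le_mul ((abs_sub _ _).trans (add_le_add hω.2.2.2.2.1 hω.2.1))
      hω.2.2.2.1 (abs_nonneg _) (by positivity)
  -- rewrite LHS
  set F : Fin d → Fin d → ℝ :=
    fun i j => ∫ ω, (deriv (deriv b) (θ ⬝ᵥ X ω) / a) * (X ω i * X ω j) ∂μ with hF
  have hLHS : ∫ ω, (deriv (deriv b) (θ ⬝ᵥ X ω) / a) * (v ⬝ᵥ X ω) ^ 2 ∂μ
      = v ⬝ᵥ (Matrix.of F).mulVec v := by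
    have hpt : ∀ ω, (deriv (deriv b) (θ ⬝ᵥ X ω) / a) * (v ⬝ᵥ X ω) ^ 2
        = ∑ i, ∑ j, v i * ((deriv (deriv b) (θ ⬝ᵥ X ω) / a) * (X ω i * X ω j)) * v j := by
      intro ω
      simp only [dotProduct]
      rw [sq, Finset.sum_mul_sum, Finset.mul_sum]
      refine Finset.sum_congr rfl fun i _ => ?_
      rw [Finset.mul_sum]
      refine Finset.sum_congr rfl fun j _ => ?_
      ring
    calc ∫ ω, (deriv (deriv b) (θ ⬝ᵥ X ω) / a) * (v ⬝ᵥ X ω) ^ 2 ∂μ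
        = ∫ ω, ∑ i, ∑ j,
            v i * ((deriv (deriv b) (θ ⬝ᵥ X ω) / a) * (X ω i * X ω j)) * v j ∂μ :=
          MeasureTheory.integral_congr_ae (Filter.Eventually.of_forall hpt)
      _ = ∑ i, ∑ j, ∫ ω,
            v i * ((deriv (deriv b) (θ ⬝ᵥ X ω) / a) * (X ω i * X ω j)) * v j ∂μ := by
          rw [MeasureTheory.integral_finset_sum _ fun i _ =>
            integrable_finset_sum _ fun j _ => ((hIa i j).const_mul (v i)).mul_const (v j)]
          exact Finset.sum_congr rfl fun i _ => MeasureTheory.integral_finset_sum _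
            fun j _ => ((hIa i j).const_mul (v i)).mul_const (v j)
      _ = ∑ i, ∑ j, v i * (F i j * v j) := by
          refine Finset.sum_congr rfl fun i _ => Finset.sum_congr rfl fun j _ => ?_
          rw [MeasureTheory.integral_mul_const, MeasureTheory.integral_const_mul, hF]
          ring
      _ = ∑ i, v i * ∑ j, F i j * v j := by
          exact Finset.sum_congr rfl fun i _ => (Finset.mul_sum _ _ _).symm
      _ = v ⬝ᵥ (Matrix.of F).mulVec v := rfl
  -- rewrite RHS
  have hRHS : ∫ ω, ((deriv b (θ ⬝ᵥ X ω) - y ω) / a) * (v ⬝ᵥ X ω) ∂μ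
      = (fun i => ∫ ω, ((deriv b (θ ⬝ᵥ X ω) - y ω) / a) * X ω i ∂μ) ⬝ᵥ v := by
    have hpt : ∀ ω, ((deriv b (θ ⬝ᵥ X ω) - y ω) / a) * (v ⬝ᵥ X ω)
        = ∑ i, (((deriv b (θ ⬝ᵥ X ω) - y ω) / a) * X ω i) * v i := by
      intro ω
      simp only [dotProduct]
      rw [Finset.mul_sum]
      refine Finset.sum_congr rfl fun i _ => ?_
      ring
    calc ∫ ω, ((deriv b (θ ⬝ᵥ X ω) - y ω) / a) * (v ⬝ᵥ X ω) ∂μ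
        = ∫ ω, ∑ i, (((deriv b (θ ⬝ᵥ X ω) - y ω) / a) * X ω i) * v i ∂μ :=
          MeasureTheory.integral_congr_ae (Filter.Eventually.of_forall hpt)
      _ = ∑ i, ∫ ω, (((deriv b (θ ⬝ᵥ X ω) - y ω) / a) * X ω i) * v i ∂μ :=
          MeasureTheory.integral_finset_sum _ fun i _ => (hIc i).mul_const (v i)
      _ = ∑ i, (∫ ω, ((deriv b (θ ⬝ᵥ X ω) - y ω) / a) * X ω i ∂μ) * v i :=
          Finset.sum_congr rfl fun i _ => MeasureTheory.integral_mul_const _ _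
      _ = (fun i => ∫ ω, ((deriv b (θ ⬝ᵥ X ω) - y ω) / a) * X ω i ∂μ) ⬝ᵥ v := rfl
  -- first order condition, vector form
  have hfoc' : ∫ ω, (y ω - deriv b (θstar ⬝ᵥ X ω)) * (v ⬝ᵥ X ω) ∂μ = 0 := by
    have hpt : ∀ ω, (y ω - deriv b (θstar ⬝ᵥ X ω)) * (v ⬝ᵥ X ω)
        = ∑ i, ((y ω - deriv b (θstar ⬝ᵥ X ω)) * X ω i) * v i := by
      intro ω
      simp only [dotProduct]
      rw [Finset.mul_sum]
      refine Finset.sum_congr rfl fun i _ => ?_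
      ring
    rw [MeasureTheory.integral_congr_ae (Filter.Eventually.of_forall hpt),
      MeasureTheory.integral_finset_sum _ fun i _ => (hId i).mul_const (v i)]
    refine Finset.sum_eq_zero fun i _ => ?_
    rw [MeasureTheory.integral_mul_const, hfoc i, zero_mul]
  -- split
  have hsplit : ∫ ω, ((deriv b (θ ⬝ᵥ X ω) - y ω) / a) * (v ⬝ᵥ X ω) ∂μ
      = ∫ ω, ((deriv b (θ ⬝ᵥ X ω) - deriv b (θstar ⬝ᵥ X ω)) / a) * (v ⬝ᵥ X ω) ∂μ := by
    have hpt : ∀ ω, ((deriv b (θ ⬝ᵥ X ω) - y ω) / a) * (v ⬝ᵥ X ω)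
        = ((deriv b (θ ⬝ᵥ X ω) - deriv b (θstar ⬝ᵥ X ω)) / a) * (v ⬝ᵥ X ω)
          - (1 / a) * ((y ω - deriv b (θstar ⬝ᵥ X ω)) * (v ⬝ᵥ X ω)) := by
      intro ω; field_simp; ring
    rw [MeasureTheory.integral_congr_ae (Filter.Eventually.of_forall hpt),
      MeasureTheory.integral_sub hIe (hIf.const_mul (1 / a)),
      MeasureTheory.integral_const_mul, hfoc', mul_zero, sub_zero]
  -- a.e. pointwise comparison
  have hkey : ∀ᵐ ω ∂μ, ρ * ((deriv (deriv b) (θ ⬝ᵥ X ω) / a) * (v ⬝ᵥ X ω) ^ 2)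
      ≤ ((deriv b (θ ⬝ᵥ X ω) - deriv b (θstar ⬝ᵥ X ω)) / a) * (v ⬝ᵥ X ω) := by
    filter_upwards [hass] with ω hω
    set z0 := θstar ⬝ᵥ X ω with hz0
    set z1 := θ ⬝ᵥ X ω with hz1
    have hZ : v ⬝ᵥ X ω = z1 - z0 := by
      rw [hv, sub_dotProduct, hz0, hz1]
    have hmvt := mvt_ineq b hb ρ z0 z1 ?_
    · rw [hZ]
      calc ρ * (deriv (deriv b) z1 / a * (z1 - z0) ^ 2)
          = ρ * deriv (deriv b) z1 * (z1 - z0) ^ 2 / a := by ring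
        _ ≤ (deriv b z1 - deriv b z0) * (z1 - z0) / a := by gcongr
        _ = (deriv b z1 - deriv b z0) / a * (z1 - z0) := by ring
    · intro c hc
      rcases hc with ⟨hc1, hc2⟩
      have hne : min z0 z1 < max z0 z1 := lt_trans hc1 hc2
      have hz01 : z0 ≠ z1 := by
        intro h; rw [h, min_self, max_self] at hne; exact lt_irrefl _ hne
      set t : ℝ := (c - z0) / (z1 - z0) with ht
      have hden : z1 - z0 ≠ 0 := sub_ne_zero_of_ne hz01.symm
      have ht01 : 0 ≤ t ∧ t ≤ 1 := by
        rcases lt_or_gt_of_ne hz01 with hlt | hgt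
        · rw [min_eq_left hlt.le] at hc1; rw [max_eq_right hlt.le] at hc2
          constructor
          · exact div_nonneg (by linarith) (by linarith)
          · rw [div_le_one (by linarith)]; linarith
        · rw [min_eq_right hgt.le] at hc1; rw [max_eq_left hgt.le] at hc2
          have : t = (z0 - c) / (z0 - z1) := by
            rw [ht, ← neg_div_neg_eq]; ring_nf
          rw [this]
          constructor
          · exact div_nonneg (by linarith) (by linarith)
          · rw [div_le_one (by linarith)]; linarith
      have hdotc : (θstar + t • v) ⬝ᵥ X ω = c := by
        rw [add_dotProduct, smul_dotProduct, smul_eq_mul, hZ, ht,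
          div_mul_cancel₀ _ hden]
        ring
      have hnorm : euclNorm ((θstar + t • v) - θstar) ≤ euclNorm (θ - θstar) := by
        rw [add_sub_cancel_left, euclNorm_smul, ← hv]
        calc |t| * euclNorm v ≤ 1 * euclNorm v := by
              apply mul_le_mul_of_nonneg_right _ (euclNorm_nonneg v)
              rw [abs_le]; exact ⟨by linarith [ht01.1], ht01.2⟩
          _ = euclNorm v := one_mul _
      have := hω (θstar + t • v) θ hnorm le_rfl
      rwa [hdotc] at this
  -- conclude
  rw [← hLHS, ← hRHS, hsplit, ← MeasureTheory.integral_const_mul]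
  exact MeasureTheory.integral_mono_ae (hIb.const_mul ρ) hIe hkey
end

section
/- Let (F_n)_{n≥0} be a filtration, (A_n)_{n≥0} a sequence of events adapted to (F_n) (A_n ∈ F_n), and (V_n)_{n≥0} a sequence of random variables adapted to (F_n) with V_0 = 1, V_n ≥ 0 almost surely for all n, and E[V_n·1_{A_{n−1}} | F_{n−1}] ≤ V_{n−1} almost surely for all n ≥ 1. Then for any δ > 0: P( (∪_{n≥1} {V_n > 1/δ}) ∪ (∪_{n≥0} A_nᶜ) ) ≤ δ + P( ∪_{n≥0} A_nᶜ ). -/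
open MeasureTheory ProbabilityTheory Real
open scoped ENNReal NNReal

open Finset in
private lemma supermartingale_maximal_aux {Ω : Type*} {m0 : MeasurableSpace Ω}
    {μ : Measure Ω} [IsFiniteMeasure μ] {𝒢 : Filtration ℕ m0} {f : ℕ → Ω → ℝ}
    (hf : Supermartingale f 𝒢 μ) (hnonneg : ∀ᵐ ω ∂μ, ∀ n, 0 ≤ f n ω) {ε : ℝ≥0} (n : ℕ) :
    (ε : ℝ≥0∞) * μ {ω | (ε : ℝ) ≤ (range (n + 1)).sup' nonempty_range_add_one fun k => f k ω} ≤
      ENNReal.ofReal (μ[f 0]) := by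
  set τ : Ω → WithTop ℕ := fun ω => (hittingBtwn f {y : ℝ | (ε : ℝ) ≤ y} 0 n ω : ℕ) with hτdef
  have hτ : IsStoppingTime 𝒢 τ := hf.stronglyAdapted.adapted.isStoppingTime_hittingBtwn measurableSet_Ici
  have hsvneg : stoppedValue (-f) τ = -stoppedValue f τ := rfl
  have hint : Integrable (stoppedValue f τ) μ := by
    have h := (hf.neg.integrable_stoppedValue hτ (fun ω => WithTop.coe_le_coe.mpr (hittingBtwn_le ω))).neg
    rw [hsvneg, neg_neg] at h
    exact h
  set S : Set Ω :=
    {ω | (ε : ℝ) ≤ (range (n + 1)).sup' nonempty_range_add_one fun k => f k ω} with hSdef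
  have hSmeas : MeasurableSet S :=
    measurableSet_le measurable_const
      (Finset.measurable_range_sup'' fun k _ => (hf.stronglyAdapted k).measurable.le (𝒢.le k))
  have hn : Set.Icc 0 n = {k | k ≤ n} := by ext x; simp
  have hkey : ∀ ω ∈ S, (ε : ℝ) ≤ stoppedValue f τ ω := by
    intro ω hω
    simp only [hSdef, Set.mem_setOf_eq, le_sup'_iff, mem_range, Nat.lt_succ_iff] at hω
    refine stoppedValue_hittingBtwn_mem ?_
    simp only [Set.mem_setOf_eq, exists_prop, hn]
    exact hω
  have h1 : (ε : ℝ) * (μ S).toReal ≤ ∫ ω in S, stoppedValue f τ ω ∂μ :=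
    by have := setIntegral_ge_of_const_le hSmeas (measure_ne_top _ _) hkey hint.integrableOn
       rw [smul_eq_mul, mul_comm] at this; exact this
  have h2 : ∫ ω in S, stoppedValue f τ ω ∂μ ≤ ∫ ω, stoppedValue f τ ω ∂μ := by
    refine setIntegral_le_integral hint ?_
    filter_upwards [hnonneg] with ω h using h _
  have h3 : ∫ ω, stoppedValue f τ ω ∂μ ≤ μ[f 0] := by
    have h := hf.neg.expected_stoppedValue_mono (isStoppingTime_const 𝒢 0) hτ
      (fun ω => WithTop.coe_le_coe.mpr (Nat.zero_le _)) (fun ω => WithTop.coe_le_coe.mpr (hittingBtwn_le ω))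
    have h0 : stoppedValue (-f) (fun _ => ((0 : ℕ) : WithTop ℕ)) = -f 0 := rfl
    rw [hsvneg] at h
    change ∫ x, (-f 0) x ∂μ ≤ _ at h
    simp only [Pi.neg_apply, integral_neg, neg_le_neg_iff] at h
    exact h
  rw [ENNReal.le_ofReal_iff_toReal_le, ENNReal.toReal_mul, ENNReal.coe_toReal]
  · exact le_trans h1 (le_trans h2 h3)
  · exact ENNReal.mul_ne_top (by simp) (measure_ne_top _ _)
  · exact le_trans (mul_nonneg ε.coe_nonneg ENNReal.toReal_nonneg) (le_trans h1 (le_trans h2 h3))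

/-- **Lemma (stopping-time argument for almost-supermartingales).** Let `(F_n)` be a filtration,
`(A_n)` adapted events and `(V_n)` an adapted nonnegative sequence with `V_0 = 1` and
`E[V_n 1_{A_{n−1}} | F_{n−1}] ≤ V_{n−1}`. Then for any `δ > 0`,
`P((⋃_{n≥1} {V_n > δ⁻¹}) ∪ (⋃_{n≥0} A_nᶜ)) ≤ δ + P(⋃_{n≥0} A_nᶜ)`. -/
theorem simultaneous_supermartingale_bound
    {Ω : Type*} {m0 : MeasurableSpace Ω} (μ : Measure Ω) [IsProbabilityMeasure μ]
    (𝓕 : Filtration ℕ m0) (A : ℕ → Set Ω)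
    (hA : ∀ n, MeasurableSet[𝓕 n] (A n))
    (V : ℕ → Ω → ℝ)
    (hVadapt : ∀ n, StronglyMeasurable[𝓕 n] (V n))
    (hVint : ∀ n, Integrable (V n) μ)
    (hV0 : ∀ᵐ ω ∂μ, V 0 ω = 1)
    (hVnonneg : ∀ n, ∀ᵐ ω ∂μ, 0 ≤ V n ω)
    (hsuper : ∀ n ≥ 1, μ[(A (n - 1)).indicator (V n)|𝓕 (n - 1)] ≤ᵐ[μ] V (n - 1))
    (δ : ℝ) (hδ : 0 < δ) :
    μ ((⋃ n ≥ 1, {ω | δ⁻¹ < V n ω}) ∪ ⋃ n, (A n)ᶜ)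
      ≤ ENNReal.ofReal δ + μ (⋃ n, (A n)ᶜ) := by
  classical
  set C : ℕ → Set Ω := fun n => ⋂ k ∈ Finset.range n, A k with hCdef
  set W : ℕ → Ω → ℝ := fun n => (C n).indicator (V n) with hWdef
  have hC : ∀ n, MeasurableSet[𝓕 n] (C n) := by
    intro n
    refine MeasurableSet.iInter fun k => MeasurableSet.iInter fun hk => ?_
    exact 𝓕.mono (Finset.mem_range.mp hk).le _ (hA k)
  have hWadapt : StronglyAdapted 𝓕 W := fun n => (hVadapt n).indicator (hC n)
  have hWint : ∀ n, Integrable (W n) μ := fun n => (hVint n).indicator (𝓕.le n _ (hC n))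
  have hCsucc : ∀ n, C (n + 1) = C n ∩ A n := by
    intro n
    ext ω
    simp only [hCdef, Set.mem_iInter, Finset.mem_range, Set.mem_inter_iff, Nat.lt_succ_iff_lt_or_eq]
    constructor
    · intro h; exact ⟨fun k hk => h k (Or.inl hk), h n (Or.inr rfl)⟩
    · rintro ⟨h1, h2⟩ k (hk | rfl)
      · exact h1 k hk
      · exact h2
  have hWsuper : Supermartingale W 𝓕 μ := by
    refine supermartingale_nat hWadapt hWint fun n => ?_
    have hint' : Integrable ((A n).indicator (V (n + 1))) μ :=
      (hVint (n + 1)).indicator (𝓕.le n _ (hA n))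
    have heq : W (n + 1) = (C n).indicator ((A n).indicator (V (n + 1))) := by
      rw [hWdef, Set.indicator_indicator, ← hCsucc]
    have h1 : μ[W (n + 1)|𝓕 n] =ᵐ[μ] (C n).indicator (μ[(A n).indicator (V (n + 1))|𝓕 n]) := by
      rw [heq]; exact condExp_indicator hint' (hC n)
    refine h1.le.trans ?_
    have h2 : μ[(A n).indicator (V (n + 1))|𝓕 n] ≤ᵐ[μ] V n := hsuper (n + 1) le_add_self
    filter_upwards [h2] with ω hω
    exact Set.indicator_le_indicator hω
  have hWnonneg : ∀ᵐ ω ∂μ, ∀ n, 0 ≤ W n ω := by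
    rw [ae_all_iff]
    intro n
    filter_upwards [hVnonneg n] with ω hω
    exact Set.indicator_nonneg (fun _ _ => hω) ω
  have hW0 : μ[W 0] = 1 := by
    have hC0 : C 0 = Set.univ := by simp [hCdef]
    have : W 0 =ᵐ[μ] fun _ => (1 : ℝ) := by
      filter_upwards [hV0] with ω hω
      simp [hWdef, hC0, hω]
    rw [integral_congr_ae this]
    simp
  set ε : ℝ≥0 := ⟨δ⁻¹, by positivity⟩ with hεdef
  have hεcoe : (ε : ℝ) = δ⁻¹ := rfl
  set S : ℕ → Set Ω := fun n =>
    {ω | (ε : ℝ) ≤ (Finset.range (n + 1)).sup' Finset.nonempty_range_add_one fun k => W k ω}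
    with hSdef
  have hSbound : ∀ n, μ (S n) ≤ ENNReal.ofReal δ := by
    intro n
    have h := supermartingale_maximal_aux hWsuper hWnonneg (ε := ε) n
    rw [hW0, ENNReal.ofReal_one] at h
    have hμS : μ (S n) ≤ (ε : ℝ≥0∞)⁻¹ := ENNReal.le_inv_iff_mul_le.mpr (by rwa [mul_comm])
    refine hμS.trans ?_
    have hcoe : (ε : ℝ≥0∞) = ENNReal.ofReal δ⁻¹ :=
      (ENNReal.ofReal_eq_coe_nnreal (by positivity)).symm
    rw [hcoe, ENNReal.ofReal_inv_of_pos hδ, inv_inv]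
  have hSmono : Monotone S := by
    intro n m hnm ω hω
    simp only [hSdef, Set.mem_setOf_eq] at hω ⊢
    exact hω.trans
      (Finset.sup'_mono _ (Finset.range_subset_range.mpr (by omega)) Finset.nonempty_range_add_one)
  have hTbound : μ (⋃ n, S n) ≤ ENNReal.ofReal δ := by
    rw [hSmono.directed_le.measure_iUnion]
    exact iSup_le hSbound
  set B : Set Ω := ⋃ n, (A n)ᶜ with hBdef
  have hsub : (⋃ n ≥ 1, {ω | δ⁻¹ < V n ω}) ∪ B ⊆ ((⋃ n, S n) ∪ B) := by
    intro ω hω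
    rcases hω with hω | hω
    · by_cases hB : ω ∈ B
      · exact Or.inr hB
      · left
        simp only [Set.mem_iUnion] at hω ⊢
        obtain ⟨n, hn1, hVn⟩ := hω
        refine ⟨n, ?_⟩
        have hωC : ω ∈ C n := by
          simp only [hBdef, Set.mem_iUnion, not_exists, Set.mem_compl_iff, not_not] at hB
          exact Set.mem_iInter.mpr fun k => Set.mem_iInter.mpr fun _ => hB k
        have hWn : W n ω = V n ω := Set.indicator_of_mem hωC _
        have hle : (ε : ℝ) ≤ W n ω := by rw [hWn, hεcoe]; exact le_of_lt hVn
        simp only [hSdef, Set.mem_setOf_eq]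
        exact le_trans hle (Finset.le_sup' (fun k => W k ω) (Finset.self_mem_range_succ n))
    · exact Or.inr hω
  calc μ ((⋃ n ≥ 1, {ω | δ⁻¹ < V n ω}) ∪ B) ≤ μ ((⋃ n, S n) ∪ B) := measure_mono hsub
    _ ≤ μ (⋃ n, S n) + μ B := measure_union_le _ _
    _ ≤ ENNReal.ofReal δ + μ B := add_le_add_left hTbound _
end
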